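/- Let n = 2^d and let A, B be polynomials over a commutative ring of degree < n. For 0 ≤ k < n, write k in binary as (…d₂d₁d₀)₂ and set ḟ_k = ∏_{j<d} (1 − x^{2^j})^{d_j}, f̄_k = ∏_{j<d} (1 + x^{2^j})^{1−d_j}, and σ_k = (−1)^{s(k)} where s(k) is the binary weight of k. Then A·B = ∑_{k=0}^{n−1} f̄_k · ( σ_k · f̄_k · x^k ⊙ ḟ_k·A ⊙ ḟ_k·B ), where ⊙ denotes the termwise (Hadamard) product of polynomials. -/

import Mathlib

open Polynomial Finset

/-- Termwise (Hadamard) product of polynomials: the `r`-th coefficient of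
`hadamard P Q` is `P.coeff r * Q.coeff r`. -/
noncomputable def hadamard {R : Type*} [CommRing R] (P Q : R[X]) : R[X] :=
  ∑ r ∈ P.support, Polynomial.C (P.coeff r * Q.coeff r) * X ^ r

section Helpers

variable {R : Type*} [CommRing R]

lemma hadamard_coeff (P Q : R[X]) (r : ℕ) :
    (hadamard P Q).coeff r = P.coeff r * Q.coeff r := by
  unfold hadamard
  rw [finset_sum_coeff]
  simp only [coeff_C_mul, coeff_X_pow, mul_ite, mul_one, mul_zero]
  rw [Finset.sum_ite_eq (P.support) r (fun i => P.coeff i * Q.coeff i)]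
  by_cases h : r ∈ P.support
  · simp [h]
  · rw [Polynomial.notMem_support_iff] at h
    simp [h, Polynomial.notMem_support_iff.mpr h]

-- test nat lemmas
lemma nat_sum_two_pow (d : ℕ) : ∑ j ∈ range d, 2 ^ j = 2 ^ d - 1 := by
  induction d with
  | zero => simp
  | succ d ih =>
    have h : 1 ≤ 2 ^ d := Nat.one_le_two_pow
    rw [Finset.sum_range_succ, ih, pow_succ]
    omega

lemma nat_bitsum (d : ℕ) : ∀ k < 2 ^ d, ∑ j ∈ range d, (if k.testBit j then 2 ^ j else 0) = k := by
  induction d with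
  | zero => intro k hk; interval_cases k; simp
  | succ d ih =>
    intro k hk
    have h2 : k / 2 < 2 ^ d := by
      have : (2:ℕ) ^ (d+1) = 2 * 2 ^ d := by ring
      omega
    rw [Finset.sum_range_succ']
    have e1 : ∀ j, (if k.testBit (j+1) then 2 ^ (j+1) else 0)
        = 2 * (if (k/2).testBit j then 2 ^ j else 0) := by
      intro j
      rw [Nat.testBit_add_one]
      split <;> ring
    rw [Finset.sum_congr rfl fun j _ => e1 j, ← Finset.mul_sum, ih _ h2]
    have e0 : (if k.testBit 0 then 2 ^ 0 else 0) = k % 2 := by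
      rw [Nat.testBit_zero]
      rcases Nat.mod_two_eq_zero_or_one k with h | h <;> simp [h]
    rw [e0]
    omega

lemma nat_cobitsum (d : ℕ) (k : ℕ) (hk : k < 2 ^ d) :
    ∑ j ∈ range d, (if k.testBit j then 0 else 2 ^ j) = 2 ^ d - 1 - k := by
  have h1 := nat_bitsum d k hk
  have h2 := nat_sum_two_pow d
  have h3 : ∑ j ∈ range d, (if k.testBit j then 0 else 2 ^ j)
      + ∑ j ∈ range d, (if k.testBit j then 2 ^ j else 0) = ∑ j ∈ range d, 2 ^ j := by
    rw [← Finset.sum_add_distrib]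
    exact Finset.sum_congr rfl fun j _ => by split <;> simp
  omega

lemma nat_digitsum_add_pow (d : ℕ) : ∀ k < 2 ^ d,
    (Nat.digits 2 (k + 2 ^ d)).sum = (Nat.digits 2 k).sum + 1 := by
  induction d with
  | zero =>
    intro k hk; interval_cases k
    rw [Nat.digits_def' (by norm_num : 1 < 2) (by norm_num)]
    simp
  | succ d ih =>
    intro k hk
    have h2 : (2:ℕ) ^ (d+1) = 2 * 2 ^ d := by ring
    have hpos : 0 < k + 2 ^ (d+1) := by positivity
    rw [Nat.digits_def' (by norm_num : 1 < 2) hpos, List.sum_cons]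
    have e1 : (k + 2 ^ (d+1)) % 2 = k % 2 := by omega
    have e2 : (k + 2 ^ (d+1)) / 2 = k / 2 + 2 ^ d := by omega
    rw [e1, e2, ih (k/2) (by omega)]
    rcases Nat.eq_zero_or_pos k with h0 | h0
    · subst h0; simp
    · rw [Nat.digits_def' (by norm_num : 1 < 2) h0, List.sum_cons]
      omega

lemma nat_testBit_add_pow {d k : ℕ} {j : ℕ} (hj : j < d) :
    (k + 2 ^ d).testBit j = k.testBit j := by
  rw [add_comm]; exact Nat.testBit_two_pow_add_gt hj k

lemma nat_testBit_self_add_pow {d k : ℕ} (hk : k < 2 ^ d) :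
    (k + 2 ^ d).testBit d = true := by
  rw [add_comm, Nat.testBit_two_pow_add_eq, Nat.testBit_lt_two_pow hk]
  rfl

lemma nat_bitsum' (d k : ℕ) (hk : k < 2 ^ d) :
    ∑ j ∈ range d, (if k.testBit j then 2 ^ j else 0) = k := nat_bitsum d k hk

end Helpers

section Defs
variable {R : Type*} [CommRing R]

noncomputable def Fb (R : Type*) [CommRing R] (d k : ℕ) : R[X] :=
  ∏ j ∈ Finset.range d, (1 + (X : R[X]) ^ (2 ^ j)) ^ (if k.testBit j then 0 else 1)

noncomputable def Fd (R : Type*) [CommRing R] (d k : ℕ) : R[X] :=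
  ∏ j ∈ Finset.range d, (1 - (X : R[X]) ^ (2 ^ j)) ^ (if k.testBit j then 1 else 0)

noncomputable def G (R : Type*) [CommRing R] (d k : ℕ) (A B : R[X]) : R[X] :=
  hadamard (hadamard ((-1 : R[X]) ^ ((Nat.digits 2 k).sum) * Fb R d k * X ^ k) (Fd R d k * A))
    (Fd R d k * B)

lemma negOnePow (s : ℕ) : ((-1 : R[X])) ^ s = C ((-1 : R) ^ s) := by
  rw [map_pow, map_neg, map_one]

lemma G_coeff (d k : ℕ) (A B : R[X]) (r : ℕ) :
    (G R d k A B).coeff r = (-1 : R) ^ ((Nat.digits 2 k).sum) *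
      ((Fb R d k * X ^ k).coeff r * ((Fd R d k * A).coeff r * (Fd R d k * B).coeff r)) := by
  unfold G
  simp only [hadamard_coeff, negOnePow, mul_assoc, coeff_C_mul]

-- structural lemmas
lemma Fb_succ_low {d k : ℕ} (hk : k < 2 ^ d) : Fb R (d + 1) k = Fb R d k * (1 + X ^ (2 ^ d)) := by
  unfold Fb
  rw [Finset.prod_range_succ, Nat.testBit_lt_two_pow hk]
  simp

lemma Fd_succ_low {d k : ℕ} (hk : k < 2 ^ d) : Fd R (d + 1) k = Fd R d k := by
  unfold Fd
  rw [Finset.prod_range_succ, Nat.testBit_lt_two_pow hk]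
  simp

lemma Fb_succ_high {d k : ℕ} (hk : k < 2 ^ d) : Fb R (d + 1) (k + 2 ^ d) = Fb R d k := by
  unfold Fb
  rw [Finset.prod_range_succ, nat_testBit_self_add_pow hk]
  simp only [if_true, pow_zero, mul_one]
  exact Finset.prod_congr rfl fun j hj => by
    rw [nat_testBit_add_pow (Finset.mem_range.mp hj)]

lemma Fd_succ_high {d k : ℕ} (hk : k < 2 ^ d) :
    Fd R (d + 1) (k + 2 ^ d) = Fd R d k * (1 - X ^ (2 ^ d)) := by
  unfold Fd
  rw [Finset.prod_range_succ, nat_testBit_self_add_pow hk]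
  simp only [if_true, pow_one]
  congr 1
  exact Finset.prod_congr rfl fun j hj => by
    rw [nat_testBit_add_pow (Finset.mem_range.mp hj)]

-- degree lemmas
lemma natDegree_Fb_le (d k : ℕ) (hk : k < 2 ^ d) :
    (Fb R d k).natDegree ≤ 2 ^ d - 1 - k := by
  unfold Fb
  refine le_trans (natDegree_prod_le _ _)
    (le_trans (Finset.sum_le_sum fun j _ => ?_) (le_of_eq (nat_cobitsum d k hk)))
  refine le_trans natDegree_pow_le ?_
  split
  · simp
  · rw [one_mul]
    refine le_trans (natDegree_add_le _ _) ?_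
    simp [natDegree_X_pow_le]

lemma natDegree_Fd_le (d k : ℕ) (hk : k < 2 ^ d) :
    (Fd R d k).natDegree ≤ k := by
  unfold Fd
  refine le_trans (natDegree_prod_le _ _)
    (le_trans (Finset.sum_le_sum fun j _ => ?_) (le_of_eq (nat_bitsum' d k hk)))
  refine le_trans natDegree_pow_le ?_
  split
  · rw [one_mul]
    refine le_trans (natDegree_sub_le _ _) ?_
    simp [natDegree_X_pow_le]
  · simp

-- vanishing lemmas (m := 2^d)
lemma Z1 (d k : ℕ) (hk : k < 2 ^ d) {r : ℕ} (hr : 2 ^ d ≤ r) :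
    (Fb R d k * X ^ k).coeff r = 0 := by
  apply coeff_eq_zero_of_natDegree_lt
  have h1 : (Fb R d k * X ^ k).natDegree ≤ (2 ^ d - 1 - k) + k := by
    refine le_trans natDegree_mul_le ?_
    exact add_le_add (natDegree_Fb_le d k hk) (natDegree_X_pow_le _)
  omega

lemma Z2 (d k : ℕ) {s : ℕ} (hs : s < k) : (Fb R d k * X ^ k).coeff s = 0 := by
  rw [coeff_mul_X_pow', if_neg (by omega)]

lemma Z3 (d k : ℕ) (hk : k < 2 ^ d) {P : R[X]} (hP : P.natDegree < 2 ^ d)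
    {s : ℕ} (hs : k ≤ s) : (Fd R d k * P).coeff (2 ^ d + s) = 0 := by
  apply coeff_eq_zero_of_natDegree_lt
  have h1 : (Fd R d k * P).natDegree ≤ k + P.natDegree :=
    le_trans natDegree_mul_le (Nat.add_le_add_right (natDegree_Fd_le d k hk) _)
  omega

-- low/high parts
noncomputable def lowP (m : ℕ) (A : R[X]) : R[X] := ∑ i ∈ range m, C (A.coeff i) * X ^ i
noncomputable def highP (m : ℕ) (A : R[X]) : R[X] := ∑ i ∈ range m, C (A.coeff (m + i)) * X ^ i

lemma lowP_coeff (m : ℕ) (A : R[X]) (r : ℕ) :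
    (lowP m A).coeff r = if r < m then A.coeff r else 0 := by
  unfold lowP
  rw [finset_sum_coeff]
  simp only [coeff_C_mul, coeff_X_pow, mul_ite, mul_one, mul_zero]
  rw [Finset.sum_ite_eq (range m) r (fun i => A.coeff i)]
  simp [Finset.mem_range]

lemma highP_coeff (m : ℕ) (A : R[X]) (r : ℕ) :
    (highP m A).coeff r = if r < m then A.coeff (m + r) else 0 := by
  unfold highP
  rw [finset_sum_coeff]
  simp only [coeff_C_mul, coeff_X_pow, mul_ite, mul_one, mul_zero]
  rw [Finset.sum_ite_eq (range m) r (fun i => A.coeff (m + i))]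
  simp [Finset.mem_range]

lemma lowP_natDegree_lt (m : ℕ) (hm : 0 < m) (A : R[X]) : (lowP m A).natDegree < m := by
  by_cases h : lowP m A = 0
  · simpa [h] using hm
  · rw [natDegree_lt_iff_degree_lt h]
    rw [degree_lt_iff_coeff_zero]
    intro r hr
    rw [lowP_coeff]
    have : ¬ r < m := by exact_mod_cast not_lt.mpr (by exact_mod_cast hr)
    simp [this]

lemma highP_natDegree_lt (m : ℕ) (hm : 0 < m) (A : R[X]) : (highP m A).natDegree < m := by
  by_cases h : highP m A = 0
  · simpa [h] using hm
  · rw [natDegree_lt_iff_degree_lt h]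
    rw [degree_lt_iff_coeff_zero]
    intro r hr
    rw [highP_coeff]
    have : ¬ r < m := by exact_mod_cast not_lt.mpr (by exact_mod_cast hr)
    simp [this]

lemma low_add_high (m : ℕ) (A : R[X]) (hA : A.natDegree < m + m) :
    A = lowP m A + highP m A * X ^ m := by
  ext r
  rw [coeff_add, lowP_coeff, coeff_mul_X_pow', highP_coeff]
  rcases lt_or_ge r m with h | h
  · rw [if_pos h, if_neg (by omega)]
    simp
  · rw [if_neg (by omega), if_pos h]
    rcases lt_or_ge (r - m) m with h2 | h2
    · rw [if_pos h2]
      simp [show m + (r - m) = r by omega]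
    · rw [if_neg (by omega)]
      simp [coeff_eq_zero_of_natDegree_lt (by omega : A.natDegree < r)]

end Defs

section Core
variable {R : Type*} [CommRing R]

lemma L0 (d k : ℕ) (hk : k < 2 ^ d) (A B : R[X])
    (hA : A.natDegree < 2 ^ d + 2 ^ d) (hB : B.natDegree < 2 ^ d + 2 ^ d) :
    G R (d + 1) k A B = G R d k (lowP (2 ^ d) A) (lowP (2 ^ d) B)
      + X ^ (2 ^ d) * G R d k (highP (2 ^ d) A) (highP (2 ^ d) B) := by
  set m := 2 ^ d with hm
  have hm1 : 0 < m := Nat.two_pow_pos d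
  have expandFb : Fb R (d+1) k * X ^ k = Fb R d k * X ^ k + (Fb R d k * X ^ k) * X ^ m := by
    rw [Fb_succ_low hk]; ring
  have expandA : Fd R (d+1) k * A
      = Fd R d k * lowP m A + (Fd R d k * highP m A) * X ^ m := by
    rw [Fd_succ_low hk]
    conv_lhs => rw [low_add_high m A hA]
    ring
  have expandB : Fd R (d+1) k * B
      = Fd R d k * lowP m B + (Fd R d k * highP m B) * X ^ m := by
    rw [Fd_succ_low hk]
    conv_lhs => rw [low_add_high m B hB]
    ring
  ext r
  rw [coeff_add, G_coeff, G_coeff]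
  rw [show X ^ m * G R d k (highP m A) (highP m B)
      = G R d k (highP m A) (highP m B) * X ^ m from mul_comm _ _,
    coeff_mul_X_pow' (G R d k (highP m A) (highP m B)) m r]
  rw [expandFb, expandA, expandB, coeff_add, coeff_add, coeff_add,
    coeff_mul_X_pow' (Fb R d k * X ^ k) m r,
    coeff_mul_X_pow' (Fd R d k * highP m A) m r,
    coeff_mul_X_pow' (Fd R d k * highP m B) m r]
  rcases lt_or_ge r m with h | h
  · have h1 : ¬ m ≤ r := by omega
    simp only [if_neg h1]
    ring
  · obtain ⟨s, rfl⟩ : ∃ s, r = m + s := ⟨r - m, by omega⟩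
    have h1 : m ≤ m + s := by omega
    simp only [if_pos h1, show m + s - m = s by omega]
    rw [G_coeff]
    have hb1 : (Fb R d k * X ^ k).coeff (m + s) = 0 := Z1 d k hk (by omega)
    rw [hb1]
    by_cases hc : k ≤ s
    · have zA : (Fd R d k * lowP m A).coeff (m + s) = 0 :=
        Z3 d k hk (lowP_natDegree_lt m hm1 A) hc
      have zB : (Fd R d k * lowP m B).coeff (m + s) = 0 :=
        Z3 d k hk (lowP_natDegree_lt m hm1 B) hc
      rw [zA, zB]
      ring
    · have z : (Fb R d k * X ^ k).coeff s = 0 := Z2 d k (by omega)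
      rw [z]
      ring

lemma L1 (d k : ℕ) (hk : k < 2 ^ d) (A B : R[X])
    (hA : A.natDegree < 2 ^ d + 2 ^ d) (hB : B.natDegree < 2 ^ d + 2 ^ d) :
    G R (d + 1) (k + 2 ^ d) A B
      = -(X ^ (2 ^ d) * G R d k (highP (2 ^ d) A - lowP (2 ^ d) A)
          (highP (2 ^ d) B - lowP (2 ^ d) B)) := by
  set m := 2 ^ d with hm
  have hm1 : 0 < m := Nat.two_pow_pos d
  have hsgn : ((-1 : R)) ^ ((Nat.digits 2 (k + m)).sum)
      = -((-1 : R) ^ ((Nat.digits 2 k).sum)) := by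
    rw [nat_digitsum_add_pow d k hk, pow_succ]
    ring
  have expandFb : Fb R (d+1) (k + m) * X ^ (k + m) = (Fb R d k * X ^ k) * X ^ m := by
    rw [Fb_succ_high hk, pow_add]; ring
  have expandA : Fd R (d+1) (k + m) * A
      = Fd R d k * lowP m A + (Fd R d k * (highP m A - lowP m A)) * X ^ m
        - (Fd R d k * highP m A) * X ^ (m + m) := by
    rw [Fd_succ_high hk]
    conv_lhs => rw [low_add_high m A hA]
    rw [pow_add]
    ring
  have expandB : Fd R (d+1) (k + m) * B
      = Fd R d k * lowP m B + (Fd R d k * (highP m B - lowP m B)) * X ^ m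
        - (Fd R d k * highP m B) * X ^ (m + m) := by
    rw [Fd_succ_high hk]
    conv_lhs => rw [low_add_high m B hB]
    rw [pow_add]
    ring
  ext r
  rw [coeff_neg, G_coeff]
  rw [show X ^ m * G R d k (highP m A - lowP m A) (highP m B - lowP m B)
      = G R d k (highP m A - lowP m A) (highP m B - lowP m B) * X ^ m from mul_comm _ _,
    coeff_mul_X_pow' (G R d k (highP m A - lowP m A) (highP m B - lowP m B)) m r]
  rw [hsgn, expandFb, expandA, expandB, coeff_sub, coeff_sub, coeff_add, coeff_add,
    coeff_mul_X_pow' (Fb R d k * X ^ k) m r,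
    coeff_mul_X_pow' (Fd R d k * (highP m A - lowP m A)) m r,
    coeff_mul_X_pow' (Fd R d k * highP m A) (m + m) r,
    coeff_mul_X_pow' (Fd R d k * (highP m B - lowP m B)) m r,
    coeff_mul_X_pow' (Fd R d k * highP m B) (m + m) r]
  rcases lt_or_ge r m with h | h
  · have h1 : ¬ m ≤ r := by omega
    have h2 : ¬ m + m ≤ r := by omega
    simp only [if_neg h1, if_neg h2]
    ring
  · obtain ⟨s, rfl⟩ : ∃ s, r = m + s := ⟨r - m, by omega⟩
    have h1 : m ≤ m + s := by omega
    simp only [if_pos h1, show m + s - m = s by omega]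
    rw [G_coeff]
    by_cases hc : k ≤ s ∧ s < m
    · have h2 : ¬ m + m ≤ m + s := by omega
      simp only [if_neg h2]
      have zA : (Fd R d k * lowP m A).coeff (m + s) = 0 :=
        Z3 d k hk (lowP_natDegree_lt m hm1 A) hc.1
      have zB : (Fd R d k * lowP m B).coeff (m + s) = 0 :=
        Z3 d k hk (lowP_natDegree_lt m hm1 B) hc.1
      rw [zA, zB]
      ring
    · have z : (Fb R d k * X ^ k).coeff s = 0 := by
        rcases not_and_or.mp hc with h1 | h1
        · exact Z2 d k (by omega)
        · exact Z1 d k hk (by omega)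
      rw [z]
      by_cases h2 : m + m ≤ m + s
      · simp only [if_pos h2]; ring
      · simp only [if_neg h2]; ring

end Core

section Main
variable {R : Type*} [CommRing R]

lemma karatsuba_main (d : ℕ) : ∀ A B : R[X], A.natDegree < 2 ^ d → B.natDegree < 2 ^ d →
    (∑ k ∈ range (2 ^ d), Fb R d k * G R d k A B) = A * B := by
  induction d with
  | zero =>
    intro A B hA hB
    have hA0 : A = C (A.coeff 0) := eq_C_of_natDegree_le_zero (by omega)
    have hB0 : B = C (B.coeff 0) := eq_C_of_natDegree_le_zero (by omega)
    rw [pow_zero, Finset.sum_range_one]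
    unfold G Fb Fd
    simp only [Finset.prod_range_zero, Nat.digits_zero, List.sum_nil, pow_zero, one_mul,
      mul_one]
    ext r
    rw [hadamard_coeff, hadamard_coeff]
    rcases Nat.eq_zero_or_pos r with rfl | hr
    · simp [coeff_one, mul_coeff_zero]
    · rw [coeff_one, if_neg (by omega)]
      conv_rhs => rw [hA0, hB0, ← C_mul]
      rw [coeff_C, if_neg (by omega)]
      ring
  | succ d ih =>
    intro A B hA hB
    set m := 2 ^ d with hm
    have hm1 : 0 < m := Nat.two_pow_pos d
    have hmm : (2:ℕ) ^ (d + 1) = m + m := by rw [pow_succ, mul_two]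
    rw [hmm] at hA hB
    rw [hmm, Finset.sum_range_add]
    have hsum1 : ∑ k ∈ range m, Fb R (d+1) k * G R (d+1) k A B
        = (1 + X ^ m) * ∑ k ∈ range m, Fb R d k * G R d k (lowP m A) (lowP m B)
          + ((1 + X ^ m) * X ^ m)
            * ∑ k ∈ range m, Fb R d k * G R d k (highP m A) (highP m B) := by
      rw [Finset.mul_sum, Finset.mul_sum, ← Finset.sum_add_distrib]
      refine Finset.sum_congr rfl fun k hk => ?_
      have hk' : k < m := Finset.mem_range.mp hk
      rw [L0 d k hk' A B hA hB, Fb_succ_low hk']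
      ring
    have hsum2 : ∑ k ∈ range m, Fb R (d+1) (m + k) * G R (d+1) (m + k) A B
        = -(X ^ m * ∑ k ∈ range m,
            Fb R d k * G R d k (highP m A - lowP m A) (highP m B - lowP m B)) := by
      have e : ∀ k ∈ range m, Fb R (d+1) (m + k) * G R (d+1) (m + k) A B
          = -(X ^ m * (Fb R d k
              * G R d k (highP m A - lowP m A) (highP m B - lowP m B))) := by
        intro k hk
        have hk' : k < m := Finset.mem_range.mp hk
        rw [add_comm m k, Fb_succ_high hk', L1 d k hk' A B hA hB]
        ring
      rw [Finset.sum_congr rfl e, Finset.sum_neg_distrib, ← Finset.mul_sum]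
    rw [hsum1, hsum2]
    have dlA := lowP_natDegree_lt m hm1 A
    have dlB := lowP_natDegree_lt m hm1 B
    have dhA := highP_natDegree_lt m hm1 A
    have dhB := highP_natDegree_lt m hm1 B
    rw [ih _ _ dlA dlB, ih _ _ dhA dhB,
      ih _ _ (lt_of_le_of_lt (natDegree_sub_le _ _) (max_lt dhA dlA))
        (lt_of_le_of_lt (natDegree_sub_le _ _) (max_lt dhB dlB))]
    conv_rhs => rw [low_add_high m A hA, low_add_high m B hB]
    ring

end Main

theorem flattened_karatsuba {R : Type*} [CommRing R] (d : ℕ) (A B : R[X])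
    (hA : A.natDegree < 2 ^ d) (hB : B.natDegree < 2 ^ d) :
    A * B =
      ∑ k ∈ Finset.range (2 ^ d),
        (∏ j ∈ Finset.range d,
            (1 + (X : R[X]) ^ (2 ^ j)) ^ (if k.testBit j then 0 else 1)) *
          hadamard
            (hadamard
              ((-1 : R[X]) ^ ((Nat.digits 2 k).sum) *
                (∏ j ∈ Finset.range d,
                  (1 + (X : R[X]) ^ (2 ^ j)) ^ (if k.testBit j then 0 else 1)) *
                X ^ k)
              ((∏ j ∈ Finset.range d,
                  (1 - (X : R[X]) ^ (2 ^ j)) ^ (if k.testBit j then 1 else 0)) * A))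
            ((∏ j ∈ Finset.range d,
                (1 - (X : R[X]) ^ (2 ^ j)) ^ (if k.testBit j then 1 else 0)) * B) := by
  have h := karatsuba_main d A B hA hB
  unfold Fb G Fd at h
  exact h.symm
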